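/- Let N ≥ 1, κ ≥ 0, let ã and B be bilinear forms on ℝ^N with |B(x,y)| ≤ M_B‖x‖‖y‖ for all x, y (M_B ≥ 0), let d ∈ ℝ^N have nonnegative entries defining s(v,w) = Σᵢ dᵢ vᵢ wᵢ, and assume there exists c > 0 such that ã(v⁺ − w⁺, v − w) + s(v⁻ − w⁻, v − w) ≥ c‖v − w‖² for all v, w ∈ ℝ^N, where ‖·‖ is the Euclidean norm. Let f : ℝ^N → ℝ be linear. If v̂, ŵ ∈ ℝ^N and z, w ∈ ℝ^N satisfy ã(z⁺, v) + s(z⁻, v) = f(v) − B(v̂⁺, v) for all v and ã(w⁺, v) + s(w⁻, v) = f(v) − B(ŵ⁺, v) for all v, then ‖z − w‖ ≤ (M_B/c)‖v̂ − ŵ‖. -/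

import Mathlib

open scoped BigOperators

/-- Componentwise clipping to `[0, κ]` on Euclidean space. -/
noncomputable def clipE {N : ℕ} (κ : ℝ) (v : EuclideanSpace ℝ (Fin N)) :
    EuclideanSpace ℝ (Fin N) :=
  WithLp.toLp 2 (fun i => max 0 (min (v i) κ))

lemma clipE_lipschitz {N : ℕ} (κ : ℝ) (a b : EuclideanSpace ℝ (Fin N)) :
    ‖clipE κ a - clipE κ b‖ ≤ ‖a - b‖ := by
  rw [EuclideanSpace.norm_eq, EuclideanSpace.norm_eq]
  apply Real.sqrt_le_sqrt
  apply Finset.sum_le_sum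
  intro i _
  have h1 : ((clipE κ a - clipE κ b) : EuclideanSpace ℝ (Fin N)) i
      = max 0 (min (a i) κ) - max 0 (min (b i) κ) := rfl
  have h2 : ((a - b) : EuclideanSpace ℝ (Fin N)) i = a i - b i := rfl
  rw [h1, h2]
  have h4 : |min (a i) κ - min (b i) κ| ≤ |a i - b i| := by
    simpa using abs_min_sub_min_le_max (a i) κ (b i) κ
  have h3 : |max 0 (min (a i) κ) - max 0 (min (b i) κ)|
      ≤ |min (a i) κ - min (b i) κ| := by
    have h := abs_max_sub_max_le_abs (min (a i) κ) (min (b i) κ) 0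
    simpa [max_comm] using h
  have habs : |max 0 (min (a i) κ) - max 0 (min (b i) κ)| ≤ |a i - b i| := h3.trans h4
  calc ‖max 0 (min (a i) κ) - max 0 (min (b i) κ)‖ ^ 2
      = |max 0 (min (a i) κ) - max 0 (min (b i) κ)| ^ 2 := by rw [Real.norm_eq_abs]
    _ ≤ |a i - b i| ^ 2 := by
        apply pow_le_pow_left₀ (abs_nonneg _) habs
    _ = ‖a i - b i‖ ^ 2 := by rw [Real.norm_eq_abs]

/-- Lipschitz continuity of the fixed-point map: if `z` and `w` solve the
monotone clipped problems with data shifted by the convective form evaluated at `vhat⁺`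
and `what⁺` respectively, then `‖z − w‖ ≤ (M_B / c) ‖vhat − what‖`. -/
theorem fixed_point_map_lipschitz (N : ℕ) (hN : 1 ≤ N) (κ : ℝ) (hκ : 0 ≤ κ)
    (A B : EuclideanSpace ℝ (Fin N) →ₗ[ℝ] EuclideanSpace ℝ (Fin N) →ₗ[ℝ] ℝ)
    (MB : ℝ) (hMB : 0 ≤ MB)
    (hB : ∀ x y : EuclideanSpace ℝ (Fin N), |B x y| ≤ MB * ‖x‖ * ‖y‖)
    (d : Fin N → ℝ) (hd : ∀ i, 0 ≤ d i)
    (s : EuclideanSpace ℝ (Fin N) → EuclideanSpace ℝ (Fin N) → ℝ)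
    (hs : ∀ v w : EuclideanSpace ℝ (Fin N), s v w = ∑ i, d i * v i * w i)
    (c : ℝ) (hc : 0 < c)
    (hmono : ∀ v w : EuclideanSpace ℝ (Fin N),
      c * ‖v - w‖ ^ 2 ≤
        A (clipE κ v - clipE κ w) (v - w)
          + s ((v - clipE κ v) - (w - clipE κ w)) (v - w))
    (f : EuclideanSpace ℝ (Fin N) →ₗ[ℝ] ℝ)
    (vhat what z w : EuclideanSpace ℝ (Fin N))
    (hz : ∀ v : EuclideanSpace ℝ (Fin N),
      A (clipE κ z) v + s (z - clipE κ z) v = f v - B (clipE κ vhat) v)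
    (hw : ∀ v : EuclideanSpace ℝ (Fin N),
      A (clipE κ w) v + s (w - clipE κ w) v = f v - B (clipE κ what) v) :
    ‖z - w‖ ≤ (MB / c) * ‖vhat - what‖ := by
  set u := z - w with hu
  -- key identity : test with v = z - w and subtract
  have hsub : ∀ a b v : EuclideanSpace ℝ (Fin N), s a v - s b v = s (a - b) v := by
    intro a b v
    rw [hs, hs, hs, ← Finset.sum_sub_distrib]
    apply Finset.sum_congr rfl
    intro i _
    have : ((a - b) : EuclideanSpace ℝ (Fin N)) i = a i - b i := rfl
    rw [this]; ring
  have key : A (clipE κ z - clipE κ w) u + s ((z - clipE κ z) - (w - clipE κ w)) u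
      = B (clipE κ what) u - B (clipE κ vhat) u := by
    have h1 := hz u
    have h2 := hw u
    have hA : A (clipE κ z - clipE κ w) u = A (clipE κ z) u - A (clipE κ w) u := by
      simp only [map_sub, LinearMap.sub_apply]
    rw [hA, ← hsub]
    linarith
  have hBlin : B (clipE κ what) u - B (clipE κ vhat) u
      = B (clipE κ what - clipE κ vhat) u := by simp only [map_sub, LinearMap.sub_apply]
  have hmain : c * ‖u‖ ^ 2 ≤ MB * ‖vhat - what‖ * ‖u‖ := by
    calc c * ‖u‖ ^ 2 ≤ A (clipE κ z - clipE κ w) u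
          + s ((z - clipE κ z) - (w - clipE κ w)) u := hmono z w
      _ = B (clipE κ what - clipE κ vhat) u := by rw [key, hBlin]
      _ ≤ |B (clipE κ what - clipE κ vhat) u| := le_abs_self _
      _ ≤ MB * ‖clipE κ what - clipE κ vhat‖ * ‖u‖ := hB _ _
      _ ≤ MB * ‖what - vhat‖ * ‖u‖ := by
          have := clipE_lipschitz κ what vhat
          have hn : (0:ℝ) ≤ ‖u‖ := norm_nonneg _
          nlinarith [mul_le_mul_of_nonneg_left this hMB, mul_le_mul_of_nonneg_right (mul_le_mul_of_nonneg_left this hMB) hn]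
      _ = MB * ‖vhat - what‖ * ‖u‖ := by rw [norm_sub_rev]
  rcases eq_or_lt_of_le (norm_nonneg u) with h0 | h0
  · rw [← h0]
    positivity
  · have hmul : c * ‖u‖ ≤ MB * ‖vhat - what‖ := by
      have h2 : c * ‖u‖ * ‖u‖ ≤ MB * ‖vhat - what‖ * ‖u‖ := by nlinarith
      exact le_of_mul_le_mul_right h2 h0
    rw [div_mul_eq_mul_div, le_div_iff₀ hc]
    linarith [hmul]
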